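/- Let x and y be complex d×d matrices with y skew-Hermitian. Then exp(t • y) * x * (exp(t • y))ᴴ = x holds for every real t if and only if y * x = x * y. (This is the matrix form of the lemma that the commutant of a connected represented symmetry group coincides with the commutant of its represented Lie algebra.) -/

import Mathlib

open Matrix

section Aux

attribute [local instance] Matrix.linftyOpNormedRing Matrix.linftyOpNormedAlgebra

lemma aux_exp_conjTranspose_smul (d : ℕ) (y : Matrix (Fin d) (Fin d) ℂ)
    (hy : yᴴ = -y) (t : ℝ) :
    (NormedSpace.exp (t • y))ᴴ = NormedSpace.exp (-(t • y)) := by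
  rw [← Matrix.exp_conjTranspose, Matrix.conjTranspose_smul, hy, smul_neg, star_trivial]

lemma aux_hasDerivAt_exp (d : ℕ) (y : Matrix (Fin d) (Fin d) ℂ) :
    HasDerivAt (fun t : ℝ => NormedSpace.exp (t • y)) y 0 := by
  have h := hasDerivAt_exp_smul_const (𝕂 := ℝ) y (0 : ℝ)
  simp at h
  exact h

lemma aux_forward (d : ℕ) (x y : Matrix (Fin d) (Fin d) ℂ) (hy : yᴴ = -y)
    (h : ∀ t : ℝ, NormedSpace.exp (t • y) * x * (NormedSpace.exp (t • y))ᴴ = x) :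
    y * x = x * y := by
  have hF : ∀ t : ℝ,
      NormedSpace.exp (t • y) * x * NormedSpace.exp (t • (-y)) = x := by
    intro t
    have := h t
    rwa [aux_exp_conjTranspose_smul d y hy, ← smul_neg] at this
  have h1 : HasDerivAt (fun t : ℝ => NormedSpace.exp (t • y)) y 0 :=
    aux_hasDerivAt_exp d y
  have h2 : HasDerivAt (fun t : ℝ => NormedSpace.exp (t • (-y))) (-y) 0 :=
    aux_hasDerivAt_exp d (-y)
  have h3 : HasDerivAt
      (fun t : ℝ => NormedSpace.exp (t • y) * x * NormedSpace.exp (t • (-y)))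
      (y * x * NormedSpace.exp ((0:ℝ) • (-y)) +
        NormedSpace.exp ((0:ℝ) • y) * x * -y) 0 := by
    have := (h1.mul_const x).mul h2
    exact this
  have h4 : HasDerivAt
      (fun t : ℝ => NormedSpace.exp (t • y) * x * NormedSpace.exp (t • (-y)))
      (y * x + x * -y) 0 := by
    simpa [NormedSpace.exp_zero] using h3
  have h5 : HasDerivAt
      (fun t : ℝ => NormedSpace.exp (t • y) * x * NormedSpace.exp (t • (-y)))
      0 0 := by
    have : (fun t : ℝ => NormedSpace.exp (t • y) * x * NormedSpace.exp (t • (-y)))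
        = fun _ : ℝ => x := funext hF
    rw [this]
    exact hasDerivAt_const 0 x
  have h6 : y * x + x * -y = 0 := h4.unique h5
  have := congrArg (· + x * y) h6
  simpa [add_assoc, mul_neg] using this

lemma aux_backward (d : ℕ) (x y : Matrix (Fin d) (Fin d) ℂ) (hy : yᴴ = -y)
    (h : y * x = x * y) (t : ℝ) :
    NormedSpace.exp (t • y) * x * (NormedSpace.exp (t • y))ᴴ = x := by
  rw [aux_exp_conjTranspose_smul d y hy]
  have hc : Commute (NormedSpace.exp (t • y)) x :=
    (Commute.smul_left (h : Commute y x) t).exp_left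
  have hinv : NormedSpace.exp (t • y) * NormedSpace.exp (-(t • y)) = 1 := by
    have e := NormedSpace.exp_add_of_commute (Commute.neg_right (Commute.refl (t • y)))
    rw [add_neg_cancel, NormedSpace.exp_zero] at e
    exact e.symm
  rw [hc.eq, mul_assoc, hinv, mul_one]

end Aux

/-- For complex `d × d` matrices `x` and `y` with `y` skew-Hermitian,
`exp (t • y) * x * (exp (t • y))ᴴ = x` for all real `t` iff `y * x = x * y`. -/
theorem skewHermitian_exp_conj_eq_iff_commute (d : ℕ) (hd : 1 ≤ d)
    (x y : Matrix (Fin d) (Fin d) ℂ) (hy : yᴴ = -y) :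
    (∀ t : ℝ, NormedSpace.exp (t • y) * x * (NormedSpace.exp (t • y))ᴴ = x) ↔
      y * x = x * y := by
  constructor
  · exact aux_forward d x y hy
  · exact fun h t => aux_backward d x y hy h t
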